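/- The thirteen evaluation vectors mₖ := (pₖ(v))_{v ∈ V} ∈ ℝ¹³ of the D2Q13 moment polynomials p₀ = 1, p₁ = −28 + 13(x²+y²), p₂ = 140 + (x²+y²)(−361/2 + (77/2)(x²+y²)), p₃ = −12 + (x²+y²)(581/12 + (x²+y²)(−273/8 + (137/24)(x²+y²))), p₄ = x, p₅ = y, p₆ = x((x²+y²) − 3), p₇ = y((x²+y²) − 3), p₈ = x(101/6 + (x²+y²)(−63/4 + (35/12)(x²+y²))), p₉ = y(101/6 + (x²+y²)(−63/4 + (35/12)(x²+y²))), p₁₀ = x² − y², p₁₁ = xy, p₁₂ = (x² − y²)(−65/12 + (17/12)(x²+y²)) are pairwise orthogonal and all nonzero, hence they form an orthogonal basis of ℝ¹³; in particular the 13 × 13 moment matrix M with entries M_{k,j} = pₖ(vⱼ) is invertible. -/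
import Mathlib


/-- The D2Q13 velocities `v₀, …, v₁₂`, enumerated in the standard order. -/
def d2q13Vel : Fin 13 → ℤ × ℤ :=
  ![(0, 0), (1, 0), (0, 1), (-1, 0), (0, -1), (1, 1), (-1, 1), (-1, -1), (1, -1),
    (2, 0), (0, 2), (-2, 0), (0, -2)]

/-- The thirteen moment polynomials `p₀, …, p₁₂` of the D2Q13 lattice Boltzmann scheme,
viewed as real functions of the two variables `x, y`. -/
noncomputable def d2q13Moment : Fin 13 → ℝ → ℝ → ℝ :=
  ![fun _ _ => 1,
    fun x y => -28 + 13 * (x ^ 2 + y ^ 2),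
    fun x y => 140 + (x ^ 2 + y ^ 2) * (-361 / 2 + (77 / 2) * (x ^ 2 + y ^ 2)),
    fun x y => -12 + (x ^ 2 + y ^ 2) *
      (581 / 12 + (x ^ 2 + y ^ 2) * (-273 / 8 + (137 / 24) * (x ^ 2 + y ^ 2))),
    fun x _ => x,
    fun _ y => y,
    fun x y => x * ((x ^ 2 + y ^ 2) - 3),
    fun x y => y * ((x ^ 2 + y ^ 2) - 3),
    fun x y => x * (101 / 6 + (x ^ 2 + y ^ 2) * (-63 / 4 + (35 / 12) * (x ^ 2 + y ^ 2))),
    fun x y => y * (101 / 6 + (x ^ 2 + y ^ 2) * (-63 / 4 + (35 / 12) * (x ^ 2 + y ^ 2))),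
    fun x y => x ^ 2 - y ^ 2,
    fun x y => x * y,
    fun x y => (x ^ 2 - y ^ 2) * (-65 / 12 + (17 / 12) * (x ^ 2 + y ^ 2))]

/-- The evaluation vector `mₖ = (pₖ(vⱼ))ⱼ ∈ ℝ¹³` of the `k`-th moment polynomial on the
D2Q13 velocity set. -/
noncomputable def d2q13MomentVec (k : Fin 13) : Fin 13 → ℝ :=
  fun j => d2q13Moment k ((d2q13Vel j).1 : ℝ) ((d2q13Vel j).2 : ℝ)

/-- The 13 × 13 moment matrix `M` with entries `M k j = pₖ(vⱼ)`. -/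
noncomputable def d2q13MomentMatrix : Matrix (Fin 13) (Fin 13) ℝ :=
  Matrix.of fun k j => d2q13MomentVec k j

/-- Integer-rescaled (by 24) versions of the D2Q13 moment polynomials. -/
def d2q13IMom : Fin 13 → ℤ → ℤ → ℤ :=
  ![fun _ _ => 24,
    fun x y => -672 + 312 * (x ^ 2 + y ^ 2),
    fun x y => 3360 + (x ^ 2 + y ^ 2) * (-4332 + 924 * (x ^ 2 + y ^ 2)),
    fun x y => -288 + (x ^ 2 + y ^ 2) * (1162 + (x ^ 2 + y ^ 2) * (-819 + 137 * (x ^ 2 + y ^ 2))),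
    fun x _ => 24 * x,
    fun _ y => 24 * y,
    fun x y => 24 * (x * ((x ^ 2 + y ^ 2) - 3)),
    fun x y => 24 * (y * ((x ^ 2 + y ^ 2) - 3)),
    fun x y => x * (404 + (x ^ 2 + y ^ 2) * (-378 + 70 * (x ^ 2 + y ^ 2))),
    fun x y => y * (404 + (x ^ 2 + y ^ 2) * (-378 + 70 * (x ^ 2 + y ^ 2))),
    fun x y => 24 * (x ^ 2 - y ^ 2),
    fun x y => 24 * (x * y),
    fun x y => (x ^ 2 - y ^ 2) * (-130 + 34 * (x ^ 2 + y ^ 2))]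

def d2q13IVec (k j : Fin 13) : ℤ := d2q13IMom k (d2q13Vel j).1 (d2q13Vel j).2

lemma d2q13_moment_eq_iMom (k : Fin 13) (a b : ℤ) :
    d2q13Moment k (a : ℝ) (b : ℝ) = (d2q13IMom k a b : ℝ) / 24 := by
  fin_cases k
  · show ((1:ℝ)) = (((24:ℤ) : ℤ) : ℝ) / 24
    push_cast; ring
  · show (-28 + 13 * ((a:ℝ) ^ 2 + (b:ℝ) ^ 2)) = ((-672 + 312 * (a ^ 2 + b ^ 2) : ℤ) : ℝ) / 24
    push_cast; ring
  · show (140 + ((a:ℝ) ^ 2 + (b:ℝ) ^ 2) * (-361 / 2 + (77 / 2) * ((a:ℝ) ^ 2 + (b:ℝ) ^ 2))) = ((3360 + (a ^ 2 + b ^ 2) * (-4332 + 924 * (a ^ 2 + b ^ 2)) : ℤ) : ℝ) / 24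
    push_cast; ring
  · show (-12 + ((a:ℝ) ^ 2 + (b:ℝ) ^ 2) * (581 / 12 + ((a:ℝ) ^ 2 + (b:ℝ) ^ 2) * (-273 / 8 + (137 / 24) * ((a:ℝ) ^ 2 + (b:ℝ) ^ 2)))) = ((-288 + (a ^ 2 + b ^ 2) * (1162 + (a ^ 2 + b ^ 2) * (-819 + 137 * (a ^ 2 + b ^ 2))) : ℤ) : ℝ) / 24
    push_cast; ring
  · show ((a:ℝ)) = ((24 * a : ℤ) : ℝ) / 24
    push_cast; ring
  · show ((b:ℝ)) = ((24 * b : ℤ) : ℝ) / 24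
    push_cast; ring
  · show ((a:ℝ) * (((a:ℝ) ^ 2 + (b:ℝ) ^ 2) - 3)) = ((24 * (a * ((a ^ 2 + b ^ 2) - 3)) : ℤ) : ℝ) / 24
    push_cast; ring
  · show ((b:ℝ) * (((a:ℝ) ^ 2 + (b:ℝ) ^ 2) - 3)) = ((24 * (b * ((a ^ 2 + b ^ 2) - 3)) : ℤ) : ℝ) / 24
    push_cast; ring
  · show ((a:ℝ) * (101 / 6 + ((a:ℝ) ^ 2 + (b:ℝ) ^ 2) * (-63 / 4 + (35 / 12) * ((a:ℝ) ^ 2 + (b:ℝ) ^ 2)))) = ((a * (404 + (a ^ 2 + b ^ 2) * (-378 + 70 * (a ^ 2 + b ^ 2))) : ℤ) : ℝ) / 24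
    push_cast; ring
  · show ((b:ℝ) * (101 / 6 + ((a:ℝ) ^ 2 + (b:ℝ) ^ 2) * (-63 / 4 + (35 / 12) * ((a:ℝ) ^ 2 + (b:ℝ) ^ 2)))) = ((b * (404 + (a ^ 2 + b ^ 2) * (-378 + 70 * (a ^ 2 + b ^ 2))) : ℤ) : ℝ) / 24
    push_cast; ring
  · show ((a:ℝ) ^ 2 - (b:ℝ) ^ 2) = ((24 * (a ^ 2 - b ^ 2) : ℤ) : ℝ) / 24
    push_cast; ring
  · show ((a:ℝ) * (b:ℝ)) = ((24 * (a * b) : ℤ) : ℝ) / 24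
    push_cast; ring
  · show (((a:ℝ) ^ 2 - (b:ℝ) ^ 2) * (-65 / 12 + (17 / 12) * ((a:ℝ) ^ 2 + (b:ℝ) ^ 2))) = (((a ^ 2 - b ^ 2) * (-130 + 34 * (a ^ 2 + b ^ 2)) : ℤ) : ℝ) / 24
    push_cast; ring

lemma d2q13MomentVec_eq (k j : Fin 13) :
    d2q13MomentVec k j = (d2q13IVec k j : ℝ) / 24 := by
  simpa [d2q13MomentVec, d2q13IVec] using
    d2q13_moment_eq_iMom k (d2q13Vel j).1 (d2q13Vel j).2

lemma d2q13_dot_eq (k l : Fin 13) :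
    ∑ j : Fin 13, d2q13MomentVec k j * d2q13MomentVec l j
      = ((∑ j : Fin 13, d2q13IVec k j * d2q13IVec l j : ℤ) : ℝ) / 576 := by
  rw [Int.cast_sum, Finset.sum_div]
  refine Finset.sum_congr rfl fun j _ => ?_
  rw [d2q13MomentVec_eq, d2q13MomentVec_eq]
  push_cast
  ring

lemma d2q13_ivec_orth : ∀ k l : Fin 13, k ≠ l →
    ∑ j : Fin 13, d2q13IVec k j * d2q13IVec l j = 0 := by decide

lemma d2q13_ivec_norm : ∀ k : Fin 13,
    ∑ j : Fin 13, d2q13IVec k j * d2q13IVec k j ≠ 0 := by decide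

/-- The thirteen evaluation vectors of the D2Q13 moment polynomials are pairwise
orthogonal for the standard Euclidean inner product on `ℝ¹³` and all nonzero, hence they
form an orthogonal basis of `ℝ¹³`: they are linearly independent and span `ℝ¹³`.
In particular, the 13 × 13 moment matrix is invertible. -/
theorem d2q13_moments_orthogonal_basis :
    (∀ k l : Fin 13, k ≠ l → ∑ j : Fin 13, d2q13MomentVec k j * d2q13MomentVec l j = 0) ∧
    (∀ k : Fin 13, d2q13MomentVec k ≠ 0) ∧
    LinearIndependent ℝ d2q13MomentVec ∧
    Submodule.span ℝ (Set.range d2q13MomentVec) = ⊤ ∧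
    IsUnit d2q13MomentMatrix := by
  have horth : ∀ k l : Fin 13, k ≠ l →
      ∑ j : Fin 13, d2q13MomentVec k j * d2q13MomentVec l j = 0 := by
    intro k l hkl
    rw [d2q13_dot_eq, d2q13_ivec_orth k l hkl]
    norm_num
  have hnorm : ∀ k : Fin 13,
      ∑ j : Fin 13, d2q13MomentVec k j * d2q13MomentVec k j ≠ 0 := by
    intro k
    rw [d2q13_dot_eq]
    have := d2q13_ivec_norm k
    exact div_ne_zero (by exact_mod_cast this) (by norm_num)
  have hne : ∀ k : Fin 13, d2q13MomentVec k ≠ 0 := by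
    intro k hk
    exact hnorm k (by simp [hk])
  have hli : LinearIndependent ℝ d2q13MomentVec := by
    rw [Fintype.linearIndependent_iff]
    intro g hg l
    have hj : ∀ j, ∑ i : Fin 13, g i * d2q13MomentVec i j = 0 := by
      intro j
      have := congrFun hg j
      simpa using this
    have key : ∑ i : Fin 13, g i *
        (∑ j : Fin 13, d2q13MomentVec i j * d2q13MomentVec l j) = 0 := by
      simp_rw [Finset.mul_sum]
      rw [Finset.sum_comm]
      simp_rw [← mul_assoc]
      calc ∑ j : Fin 13, ∑ i : Fin 13, g i * d2q13MomentVec i j * d2q13MomentVec l j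
          = ∑ j : Fin 13, (∑ i : Fin 13, g i * d2q13MomentVec i j) * d2q13MomentVec l j := by
            simp_rw [Finset.sum_mul]
        _ = 0 := by simp [hj]
    rw [Finset.sum_eq_single l (fun i _ hil => by rw [horth i l hil, mul_zero])
      (by simp)] at key
    rcases mul_eq_zero.mp key with h | h
    · exact h
    · exact absurd h (hnorm l)
  refine ⟨horth, hne, hli, ?_, ?_⟩
  · apply hli.span_eq_top_of_card_eq_finrank
    simp
  · exact Matrix.linearIndependent_rows_iff_isUnit.mp hli
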